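/- Let M ∈ GL_n(ℂ) and let (ξ₁,…,ξ_w) be nonzero complex numbers with ∏₁^w (M − ξ_i) = 0. Define d_i = rank((M − ξ₁)⋯(M − ξ_{i-1})) (so d₁ = n) and q_i = ξ_i/ξ_{i-1} (with q₁ = ξ₁). Then det(M) = ∏₁^w q_i^{d_i}. -/

import Mathlib

open Module LinearMap

lemma det_split {V : Type} [AddCommGroup V] [Module ℂ V] [FiniteDimensional ℂ V]
    (f : Module.End ℂ V) (c : ℂ) (W : Submodule ℂ V)
    (hr : ∀ v : V, (f - c • 1) v ∈ W)
    (hW : ∀ x ∈ W, f x ∈ W) :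
    LinearMap.det f = LinearMap.det (f.restrict hW) * c ^ (finrank ℂ V - finrank ℂ W) := by
  obtain ⟨q, hq⟩ := Submodule.exists_isCompl W
  have hdim : finrank ℂ W + finrank ℂ q = finrank ℂ V := Submodule.finrank_add_eq_of_isCompl hq
  let e := W.prodEquivOfIsCompl q hq
  let bp := finBasis ℂ W
  let bq := finBasis ℂ q
  let b := bp.prod bq
  let g := (e.symm : V →ₗ[ℂ] W × q) ∘ₗ f ∘ₗ (e.symm.symm : (W × q) →ₗ[ℂ] V)
  let A := LinearMap.toMatrix bp bp (f.restrict hW)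
  let B := Matrix.of fun i j => (LinearMap.toMatrix b b g) (Sum.inl i) (Sum.inr j)
  have hgl : ∀ j, g (b (Sum.inl j)) = (f.restrict hW (bp j), 0) := by
    intro j
    show e.symm (f (e.symm.symm (b (Sum.inl j)))) = _
    have hb : (b (Sum.inl j) : W × q) = (bp j, (0 : q)) := by
      apply Prod.ext
      · exact bp.prod_apply_inl_fst bq j
      · exact bp.prod_apply_inl_snd bq j
    rw [LinearEquiv.symm_symm, hb]
    have he : e (bp j, (0:q)) = (bp j : V) := by
      simp [e, Submodule.coe_prodEquivOfIsCompl']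
    rw [he]
    have : f (bp j : V) = ((f.restrict hW (bp j) : W) : V) := rfl
    rw [this, Submodule.prodEquivOfIsCompl_symm_apply_left]
  have hgr : ∀ j, g (b (Sum.inr j)) =
      (⟨(f - c • 1) (bq j : V), hr _⟩, c • bq j) := by
    intro j
    show e.symm (f (e.symm.symm (b (Sum.inr j)))) = _
    have hb : (b (Sum.inr j) : W × q) = ((0 : W), bq j) := by
      apply Prod.ext
      · exact bp.prod_apply_inr_fst bq j
      · exact bp.prod_apply_inr_snd bq j
    rw [LinearEquiv.symm_symm, hb]
    have he : e ((0:W), bq j) = (bq j : V) := by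
      simp [e, Submodule.coe_prodEquivOfIsCompl']
    rw [he]
    have hf : f (bq j : V) = ((⟨(f - c • 1) (bq j : V), hr _⟩ : W) : V) + c • (bq j : V) := by
      simp [LinearMap.sub_apply]
    rw [hf, map_add, map_smul, Submodule.prodEquivOfIsCompl_symm_apply_left,
      Submodule.prodEquivOfIsCompl_symm_apply_right]
    ext <;> simp
  have key : LinearMap.toMatrix b b g = Matrix.fromBlocks A B 0 (c • 1) := by
    ext (i | i) (j | j)
    · show (LinearMap.toMatrix b b g) (Sum.inl i) (Sum.inl j) = A i j
      rw [LinearMap.toMatrix_apply, hgl j]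
      rw [Basis.prod_repr_inl]
      simp only [LinearMap.toMatrix_apply, A]
    · rfl
    · show (LinearMap.toMatrix b b g) (Sum.inr i) (Sum.inl j) = 0
      rw [LinearMap.toMatrix_apply, hgl j, Basis.prod_repr_inr]
      simp
    · show (LinearMap.toMatrix b b g) (Sum.inr i) (Sum.inr j) = (c • (1 : Matrix _ _ ℂ)) i j
      rw [LinearMap.toMatrix_apply, hgr j, Basis.prod_repr_inr]
      simp [Matrix.one_apply, Finsupp.single_apply, eq_comm]
  rw [← LinearMap.det_conj f e.symm]
  rw [← LinearMap.det_toMatrix b, key, Matrix.det_fromBlocks_zero₂₁, Matrix.det_smul,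
    Matrix.det_one, mul_one, Fintype.card_fin, LinearMap.det_toMatrix]
  rw [Nat.eq_sub_of_add_eq' hdim]

section helpers
variable {V : Type} [AddCommGroup V] [Module ℂ V]

lemma my_prod_maps (p : Submodule ℂ V) (l : List (Module.End ℂ V))
    (hl : ∀ g ∈ l, ∀ x ∈ p, g x ∈ p) : ∀ x ∈ p, l.prod x ∈ p := by
  induction l with
  | nil => intro x hx; simpa using hx
  | cons a t ih =>
    intro x hx
    rw [List.prod_cons, Module.End.mul_apply]
    exact hl a (List.mem_cons_self (a := a) (l := t)) _ (ih (fun g hg => hl g (List.mem_cons_of_mem a hg)) x hx)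

lemma my_restrict_one (p : Submodule ℂ V) (h : ∀ x ∈ p, (1 : Module.End ℂ V) x ∈ p) :
    (1 : Module.End ℂ V).restrict h = 1 := by
  ext x; rfl

lemma my_restrict_prod (p : Submodule ℂ V) (F : ℕ → Module.End ℂ V)
    (G : ℕ → Module.End ℂ p)
    (hF : ∀ j, ∀ x ∈ p, F j x ∈ p)
    (hFG : ∀ j, (F j).restrict (hF j) = G j) (k : ℕ) :
    ∀ (h : ∀ x ∈ p, (((List.range k).map F).prod) x ∈ p),
      (((List.range k).map F).prod).restrict h = ((List.range k).map G).prod := by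
  induction k with
  | zero => intro h; simpa using my_restrict_one p _
  | succ k ih =>
    intro h
    have hPk : ∀ x ∈ p, (((List.range k).map F).prod) x ∈ p := by
      apply my_prod_maps
      intro g hg
      simp only [List.mem_map, List.mem_range] at hg
      obtain ⟨j, -, rfl⟩ := hg
      exact hF j
    have hsplit : ((List.range (k+1)).map F).prod
        = (((List.range k).map F).prod) ∘ₗ F k := by
      rw [List.range_succ, List.map_append, List.prod_append]
      simp [Module.End.mul_eq_comp]
    have h' : ∀ x ∈ p, ((((List.range k).map F).prod) ∘ₗ F k) x ∈ p := by
      intro x hx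
      exact hPk _ (hF k x hx)
    have : (((List.range (k+1)).map F).prod).restrict h
        = ((((List.range k).map F).prod) ∘ₗ F k).restrict h' := by
      congr 1
    rw [this, LinearMap.restrict_comp (hF k) hPk, ih hPk, hFG k,
      List.range_succ, List.map_append, List.prod_append]
    simp [Module.End.mul_eq_comp]

end helpers

lemma my_aux : ∀ (w : ℕ) (V : Type) [AddCommGroup V] [Module ℂ V] [FiniteDimensional ℂ V]
    (f : Module.End ℂ V) (ξ : ℕ → ℂ),
    (((List.range w).map fun j => f - ξ j • 1).prod = 0) →
    LinearMap.det f * ∏ i ∈ Finset.range w,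
        ξ i ^ finrank ℂ (LinearMap.range (((List.range (i+1)).map fun j => f - ξ j • 1).prod))
      = ∏ i ∈ Finset.range w,
        ξ i ^ finrank ℂ (LinearMap.range (((List.range i).map fun j => f - ξ j • 1).prod)) := by
  intro w
  induction w with
  | zero =>
    intro V _ _ _ f ξ hann
    simp only [List.range_zero, List.map_nil, List.prod_nil] at hann
    haveI hsub : Subsingleton V := by
      refine ⟨fun a b => ?_⟩
      have ha := LinearMap.ext_iff.mp hann a
      have hb := LinearMap.ext_iff.mp hann b
      simp only [Module.End.one_apply, LinearMap.zero_apply] at ha hb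
      rw [ha, hb]
    rw [LinearMap.det_eq_one_of_subsingleton]
    simp
  | succ w ih =>
    intro V _ _ _ f ξ hann
    set F : ℕ → Module.End ℂ V := fun j => f - ξ j • 1 with hF
    have hcomm : ∀ a b : ℕ, Commute (F a) (F b) := by
      intro a b
      have h1 : Commute f (ξ b • (1 : Module.End ℂ V)) :=
        ((Commute.one_right f).smul_right (ξ b))
      have h2 : Commute (ξ a • (1 : Module.End ℂ V)) f :=
        ((Commute.one_left f).smul_left (ξ a))
      have h3 : Commute (ξ a • (1 : Module.End ℂ V)) (ξ b • (1 : Module.End ℂ V)) :=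
        ((Commute.refl (1 : Module.End ℂ V)).smul_left (ξ a)).smul_right (ξ b)
      exact ((Commute.refl f).sub_right h1).sub_left (h2.sub_right h3)
    set W := LinearMap.range (F 0) with hW
    have hWF : ∀ (j : ℕ), ∀ x ∈ W, F j x ∈ W := by
      rintro j x ⟨v, rfl⟩
      refine ⟨F j v, ?_⟩
      have := LinearMap.ext_iff.mp (hcomm 0 j).eq v
      simpa [Module.End.mul_apply] using this
    have hWf : ∀ x ∈ W, f x ∈ W := by
      intro x hx
      have h1 := hWF 0 x hx
      have : f x = F 0 x + ξ 0 • x := by simp [hF]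
      rw [this]
      exact W.add_mem h1 (W.smul_mem _ hx)
    set g := f.restrict hWf with hg
    -- restricted factors
    have hGF : ∀ j, (F (j+1)).restrict (hWF (j+1)) = g - ξ (j+1) • 1 := by
      intro j
      ext x
      simp [hF, hg, LinearMap.restrict_apply, LinearMap.sub_apply]
    -- shifted products on V
    set P' : ℕ → Module.End ℂ V := fun i => ((List.range i).map fun j => F (j+1)).prod with hP'
    have hP'maps : ∀ i, ∀ x ∈ W, P' i x ∈ W := by
      intro i
      apply my_prod_maps
      intro a ha
      simp only [List.mem_map, List.mem_range] at ha
      obtain ⟨j, -, rfl⟩ := ha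
      exact hWF (j+1)
    have hP'restr : ∀ i, (P' i).restrict (hP'maps i)
        = ((List.range i).map fun j => g - ξ (j+1) • 1).prod := by
      intro i
      exact my_restrict_prod W (fun j => F (j+1)) (fun j => g - ξ (j+1) • 1)
        (fun j => hWF (j+1)) hGF i (hP'maps i)
    -- factorization P (i+1) = P' i * F 0
    have hfact : ∀ i, ((List.range (i+1)).map F).prod = P' i * F 0 := by
      intro i
      rw [List.range_succ_eq_map, List.map_cons, List.prod_cons, List.map_map]
      have hc : Commute (F 0) (P' i) := by
        apply Commute.list_prod_right
        intro y hy
        simp only [List.mem_map, List.mem_range] at hy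
        obtain ⟨j, -, rfl⟩ := hy
        exact hcomm 0 (j+1)
      exact hc.eq
    -- rank identification
    have hrank : ∀ i, finrank ℂ (LinearMap.range
          (((List.range i).map fun j => g - ξ (j+1) • 1).prod))
        = finrank ℂ (LinearMap.range (((List.range (i+1)).map F).prod)) := by
      intro i
      rw [← hP'restr i, hfact i]
      have h1 : LinearMap.range ((P' i).restrict (hP'maps i))
          = (W.map (P' i)).comap W.subtype := by
        ext x
        constructor
        · rintro ⟨y, rfl⟩
          exact ⟨y.1, y.2, rfl⟩
        · rintro ⟨y, hy, hxy⟩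
          exact ⟨⟨y, hy⟩, Subtype.ext hxy⟩
      rw [h1]
      have hle : W.map (P' i) ≤ W := by
        rintro x ⟨y, hy, rfl⟩
        exact hP'maps i y hy
      have h2 : Submodule.map (P' i) W = LinearMap.range (P' i * F 0) := by
        rw [Module.End.mul_eq_comp, LinearMap.range_comp, ← hW]
      rw [LinearEquiv.finrank_eq (Submodule.comapSubtypeEquivOfLe hle), h2]
    -- annihilation transfer
    have hann' : ((List.range w).map fun j => g - ξ (j+1) • 1).prod = 0 := by
      rw [← hP'restr w]
      ext x
      rcases x.2 with ⟨v, hv⟩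
      have : P' w (x : V) = 0 := by
        rw [← hv, ← Module.End.mul_apply, ← hfact w, hann]
        rfl
      simpa [LinearMap.restrict_apply] using this
    have IH := ih W g (fun j => ξ (j+1)) hann'
    -- det splitting
    have hrange0 : ∀ v : V, (f - ξ 0 • 1) v ∈ W := fun v => ⟨v, rfl⟩
    have hdet : LinearMap.det f
        = LinearMap.det g * ξ 0 ^ (finrank ℂ V - finrank ℂ W) :=
      det_split f (ξ 0) W hrange0 hWf
    simp only [hrank] at IH
    have hle : finrank ℂ W ≤ finrank ℂ V := Submodule.finrank_le W
    have hpow : ξ 0 ^ (finrank ℂ V - finrank ℂ W) * ξ 0 ^ finrank ℂ W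
        = ξ 0 ^ finrank ℂ V := by
      rw [← pow_add, Nat.sub_add_cancel hle]
    have hA1 : finrank ℂ (LinearMap.range (((List.range 1).map F).prod)) = finrank ℂ W := by
      have h1 : ((List.range 1).map F).prod = F 0 := by
        simp [List.range_succ]
      rw [h1]
    have hA0 : finrank ℂ (LinearMap.range (((List.range 0).map F).prod)) = finrank ℂ V := by
      have : LinearMap.range (((List.range 0).map F).prod) = ⊤ := by
        simp only [List.range_zero, List.map_nil, List.prod_nil]
        ext x
        simp only [LinearMap.mem_range, Submodule.mem_top, iff_true]
        exact ⟨x, rfl⟩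
      rw [this, finrank_top]
    rw [Finset.prod_range_succ', Finset.prod_range_succ', hdet, hA1, hA0]
    linear_combination (ξ 0 ^ (finrank ℂ V - finrank ℂ W) * ξ 0 ^ finrank ℂ W) * IH
      + (∏ i ∈ Finset.range w,
          ξ (i+1) ^ finrank ℂ (LinearMap.range (((List.range (i+1)).map F).prod))) * hpow

lemma my_tele (w : ℕ) (ξ q : ℕ → ℂ) (d : ℕ → ℕ) (hξ : ∀ i < w + 1, ξ i ≠ 0)
    (hq0 : q 0 = ξ 0) (hq : ∀ i, 0 < i → q i = ξ i / ξ (i - 1)) :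
    (∏ i ∈ Finset.range (w+1), q i ^ d i) * (∏ i ∈ Finset.range (w+1), ξ i ^ d (i+1))
      = (∏ i ∈ Finset.range (w+1), ξ i ^ d i) * ξ w ^ d (w+1) := by
  induction w with
  | zero => simp [hq0]
  | succ w ih =>
    have hξ' : ∀ i < w + 1, ξ i ≠ 0 := fun i hi => hξ i (by omega)
    have IH := ih hξ'
    rw [Finset.prod_range_succ (fun i => q i ^ d i), Finset.prod_range_succ
      (fun i => ξ i ^ d (i+1)), Finset.prod_range_succ (fun i => ξ i ^ d i)]
    have h := hq (w+1) (Nat.succ_pos w)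
    simp only [Nat.add_sub_cancel] at h
    have hqq : ξ w ^ d (w+1) * q (w+1) ^ d (w+1) = ξ (w+1) ^ d (w+1) := by
      rw [← mul_pow, h]
      congr 1
      field_simp
      exact mul_div_cancel_left₀ _ (hξ w (by omega))
    linear_combination (q (w+1) ^ d (w+1) * ξ (w+1) ^ d (w+2)) * IH
      + ((∏ i ∈ Finset.range (w+1), ξ i ^ d i) * ξ (w+1) ^ d (w+2)) * hqq

/-- If `M ∈ GL_n(ℂ)` is annihilated by `∏ (M − ξ_i)` with all `ξ_i ≠ 0`, and
`d_i = rank((M−ξ₁)⋯(M−ξ_{i-1}))`, `q_i = ξ_i/ξ_{i-1}` (`q₁ = ξ₁`), then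
`det M = ∏ q_i^{d_i}`.  (Indices here are `0`-based.) -/
theorem stmt_8 (n w : ℕ) (M : Matrix (Fin n) (Fin n) ℂ) (hM : IsUnit M)
    (ξ : ℕ → ℂ) (hξ : ∀ i < w, ξ i ≠ 0)
    (hann : ((List.range w).map fun j => M - ξ j • 1).prod = 0)
    (d : ℕ → ℕ)
    (hd : ∀ i, d i = Matrix.rank (((List.range i).map fun j => M - ξ j • 1).prod))
    (q : ℕ → ℂ) (hq0 : q 0 = ξ 0) (hq : ∀ i, 0 < i → q i = ξ i / ξ (i - 1)) :
    M.det = ∏ i ∈ Finset.range w, q i ^ d i := by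
  have hP : ∀ A : Matrix (Fin n) (Fin n) ℂ, A.mulVecLin = Matrix.toLinAlgEquiv' A := by
    intro A
    ext v
    simp [Matrix.toLinAlgEquiv'_apply, Matrix.mulVecLin_apply]
  have hEnd : ∀ i, (((List.range i).map fun j => M - ξ j • 1).prod).mulVecLin
      = ((List.range i).map fun j => M.mulVecLin - ξ j • 1).prod := by
    intro i
    rw [hP, map_list_prod, List.map_map]
    congr 1
    apply List.map_congr_left
    intro j _
    simp only [Function.comp_apply, map_sub, map_smul, map_one]
    rw [← hP]
  have hdetM : M.det = LinearMap.det M.mulVecLin := by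
    rw [← Matrix.toLin'_apply', LinearMap.det_toLin']
  have hd' : ∀ i, d i = finrank ℂ (LinearMap.range
      (((List.range i).map fun j => M.mulVecLin - ξ j • 1).prod)) := by
    intro i
    rw [hd i, ← hEnd i]
    rfl
  have hannE : ((List.range w).map fun j => M.mulVecLin - ξ j • 1).prod = 0 := by
    rw [← hEnd w, hann]
    ext v
    simp
  have E := my_aux w (Fin n → ℂ) M.mulVecLin ξ hannE
  have E' : M.det * ∏ i ∈ Finset.range w, ξ i ^ d (i+1)
      = ∏ i ∈ Finset.range w, ξ i ^ d i := by
    rw [hdetM]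
    rw [Finset.prod_congr rfl (fun i _ => by rw [hd' (i+1)] :
      ∀ i ∈ Finset.range w, ξ i ^ d (i+1) = ξ i ^ finrank ℂ (LinearMap.range
        (((List.range (i+1)).map fun j => M.mulVecLin - ξ j • 1).prod)))]
    rw [Finset.prod_congr rfl (fun i _ => by rw [hd' i] :
      ∀ i ∈ Finset.range w, ξ i ^ d i = ξ i ^ finrank ℂ (LinearMap.range
        (((List.range i).map fun j => M.mulVecLin - ξ j • 1).prod)))]
    exact E
  cases w with
  | zero => simpa using E'
  | succ v =>
    have hd0 : d (v+1) = 0 := by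
      rw [hd, hann, Matrix.rank_zero]
    have T := my_tele v ξ q d hξ hq0 hq
    rw [hd0, pow_zero, mul_one] at T
    have hA : (∏ i ∈ Finset.range (v+1), ξ i ^ d (i+1)) ≠ 0 := by
      apply Finset.prod_ne_zero_iff.mpr
      intro i hi
      exact pow_ne_zero _ (hξ i (Finset.mem_range.mp hi))
    exact mul_right_cancel₀ hA (E'.trans T.symm)
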